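/- Fix n ≥ 1 and let p₁,…,p_{2n} ∈ (0,1) with q_j := 1 − p_j and q₀ := 1, and set S_m := Σ_{j=1}^m q_{j−1} p_j. Define F(p) = (1/2)Σ_{j=1}^n (n−j+1) log(q_{2j−2} p_{2j−1} q_{2j−1} p_{2j}) + (1/2) log(p₁ p₂ q₁) − log(S_{2n}). If (p₁,…,p_{2n}) is a critical point of F (all partial derivatives vanish), then the conditions ∂F/∂p_{2n} = 0 and ∂F/∂p_{2n−1} = 0 imply q_{2n−1} p_{2n} = S_{2n−1} and p_{2n} q_{2n−1} = q_{2n−2} p_{2n−1}, hence S_{2n−2} = 0, which contradicts p_j ∈ (0,1) for all j. Consequently F has no critical point in (0,1)^{2n}. -/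

import Mathlib

/-- `q j = 1 - p j`, with `q 0 := 1`. -/
noncomputable def qJ (p : ℕ → ℝ) (j : ℕ) : ℝ := if j = 0 then 1 else 1 - p j

/-- `S m = ∑_{j=1}^m q_{j-1} p_j`. -/
noncomputable def SJ (p : ℕ → ℝ) (m : ℕ) : ℝ :=
  ∑ j ∈ Finset.Icc 1 m, qJ p (j - 1) * p j

/-- The log-criterion `F` for the Jeffreys prior in canonical moments. -/
noncomputable def FJ (n : ℕ) (p : ℕ → ℝ) : ℝ :=
  (1 / 2) * ∑ j ∈ Finset.Icc 1 n, ((n : ℝ) - j + 1) *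
      Real.log (qJ p (2 * j - 2) * p (2 * j - 1) * qJ p (2 * j - 1) * p (2 * j)) +
    (1 / 2) * Real.log (p 1 * p 2 * qJ p 1) - Real.log (SJ p (2 * n))

lemma qJ_update_ne (p : ℕ → ℝ) (i j : ℕ) (t : ℝ) (h : i ≠ j) :
    qJ (Function.update p j t) i = qJ p i := by
  simp [qJ, Function.update_of_ne h]

lemma SJ_succ (p : ℕ → ℝ) (m : ℕ) :
    SJ p (m + 1) = SJ p m + qJ p m * p (m + 1) := by
  unfold SJ
  rw [Finset.sum_Icc_succ_top (by omega)]
  simp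

lemma SJ_update_ne (p : ℕ → ℝ) (j : ℕ) (t : ℝ) (m : ℕ) (h : m < j) :
    SJ (Function.update p j t) m = SJ p m := by
  unfold SJ
  refine Finset.sum_congr rfl fun i hi => ?_
  simp only [Finset.mem_Icc] at hi
  rw [qJ_update_ne _ _ _ _ (by omega), Function.update_of_ne (by omega)]

lemma SJ_update_pen (p : ℕ → ℝ) (k : ℕ) (t : ℝ) :
    SJ (Function.update p (k + 1) t) (k + 2) =
      SJ p k + qJ p k * t + (1 - t) * p (k + 2) := by
  rw [show k + 2 = (k + 1) + 1 from rfl, SJ_succ, SJ_succ,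
    SJ_update_ne _ _ _ _ (by omega), qJ_update_ne _ _ _ _ (by omega),
    Function.update_self, Function.update_of_ne (show k + 1 + 1 ≠ k + 1 by omega)]
  have h2 : qJ (Function.update p (k + 1) t) (k + 1) = 1 - t := by
    unfold qJ
    rw [if_neg (by omega), Function.update_self]
  rw [h2]


lemma key1 (A B S1 c x : ℝ) (hB : B * x ≠ 0) (hS : S1 + c * x ≠ 0)
    (h : HasDerivAt (fun t => A + (1 / 2) * Real.log (B * t) - Real.log (S1 + c * t)) 0 x) :
    (1 / 2) * (B / (B * x)) - c / (S1 + c * x) = 0 := by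
  have hm1 : HasDerivAt (fun t : ℝ => B * t) B x := by
    simpa using (hasDerivAt_id x).const_mul B
  have hm4 : HasDerivAt (fun t : ℝ => S1 + c * t) c x := by
    simpa using ((hasDerivAt_id x).const_mul c).const_add S1
  have hmine : HasDerivAt (fun t : ℝ => A + (1 / 2) * Real.log (B * t) - Real.log (S1 + c * t))
      ((1 / 2) * (B / (B * x)) - c / (S1 + c * x)) x :=
    (((hm1.log hB).const_mul (1 / 2)).const_add A).sub (hm4.log hS)
  exact hmine.unique h

lemma key2 (A q2 b S2 x : ℝ) (hB : q2 * x * (1 - x) * b ≠ 0)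
    (hS : S2 + q2 * x + (1 - x) * b ≠ 0)
    (h : HasDerivAt (fun t => A + (1 / 2) * Real.log (q2 * t * (1 - t) * b) -
        Real.log (S2 + q2 * t + (1 - t) * b)) 0 x) :
    (1 / 2) * ((q2 * (1 - x) + q2 * x * (-1)) * b / (q2 * x * (1 - x) * b)) -
      (q2 + (-1) * b) / (S2 + q2 * x + (1 - x) * b) = 0 := by
  have hm1 : HasDerivAt (fun t : ℝ => q2 * t) q2 x := by
    simpa using (hasDerivAt_id x).const_mul q2
  have hm2 : HasDerivAt (fun t : ℝ => 1 - t) (-1) x := by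
    simpa using (hasDerivAt_id' x).const_sub (1 : ℝ)
  have hm3 : HasDerivAt (fun t : ℝ => q2 * t * (1 - t) * b)
      ((q2 * (1 - x) + q2 * x * (-1)) * b) x := (hm1.mul hm2).mul_const b
  have hm4 : HasDerivAt (fun t : ℝ => S2 + q2 * t + (1 - t) * b) (q2 + (-1) * b) x :=
    (hm1.const_add S2).add (hm2.mul_const b)
  have hmine := (((hm3.log hB).const_mul (1 / 2)).const_add A).sub (hm4.log hS)
  exact hmine.unique h

lemma FJ_update_top (n : ℕ) (hn : 2 ≤ n) (p : ℕ → ℝ) (t : ℝ) :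
    FJ n (Function.update p (2 * n) t) =
      ((1 / 2) * ∑ j ∈ (Finset.Icc 1 n).erase n, ((n : ℝ) - j + 1) *
          Real.log (qJ p (2 * j - 2) * p (2 * j - 1) * qJ p (2 * j - 1) * p (2 * j)) +
        (1 / 2) * Real.log (p 1 * p 2 * qJ p 1))
      + (1 / 2) * Real.log (qJ p (2 * n - 2) * p (2 * n - 1) * qJ p (2 * n - 1) * t)
      - Real.log (SJ p (2 * n - 1) + qJ p (2 * n - 1) * t) := by
  have hmemn : n ∈ Finset.Icc 1 n := by simp; omega
  unfold FJ
  have hsum : ∑ j ∈ Finset.Icc 1 n, ((n : ℝ) - j + 1) *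
      Real.log (qJ (Function.update p (2 * n) t) (2 * j - 2) *
        Function.update p (2 * n) t (2 * j - 1) *
        qJ (Function.update p (2 * n) t) (2 * j - 1) *
        Function.update p (2 * n) t (2 * j)) =
      (∑ j ∈ (Finset.Icc 1 n).erase n, ((n : ℝ) - j + 1) *
        Real.log (qJ p (2 * j - 2) * p (2 * j - 1) * qJ p (2 * j - 1) * p (2 * j)))
      + Real.log (qJ p (2 * n - 2) * p (2 * n - 1) * qJ p (2 * n - 1) * t) := by
    rw [← Finset.sum_erase_add _ _ hmemn]
    congr 1
    · refine Finset.sum_congr rfl fun j hj => ?_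
      simp only [Finset.mem_erase, Finset.mem_Icc] at hj
      rw [qJ_update_ne _ _ _ _ (by omega), qJ_update_ne _ _ _ _ (by omega),
        Function.update_of_ne (by omega), Function.update_of_ne (by omega)]
    · rw [qJ_update_ne _ _ _ _ (by omega), qJ_update_ne _ _ _ _ (by omega),
        Function.update_of_ne (by omega), Function.update_self]
      have : ((n : ℝ) - n + 1) = 1 := by ring
      rw [this, one_mul]
  have hmid : Function.update p (2 * n) t 1 * Function.update p (2 * n) t 2 *
      qJ (Function.update p (2 * n) t) 1 = p 1 * p 2 * qJ p 1 := by
    rw [qJ_update_ne _ _ _ _ (by omega), Function.update_of_ne (by omega),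
      Function.update_of_ne (by omega)]
  have hS : SJ (Function.update p (2 * n) t) (2 * n) =
      SJ p (2 * n - 1) + qJ p (2 * n - 1) * t := by
    have h1 : 2 * n = (2 * n - 1) + 1 := by omega
    rw [h1, SJ_succ, SJ_update_ne _ _ _ _ (by omega),
      qJ_update_ne _ _ _ _ (by omega), ← h1, Function.update_self]
  rw [hsum, hmid, hS]
  ring

lemma FJ_update_pen (n : ℕ) (hn : 2 ≤ n) (p : ℕ → ℝ) (t : ℝ) :
    FJ n (Function.update p (2 * n - 1) t) =
      ((1 / 2) * ∑ j ∈ (Finset.Icc 1 n).erase n, ((n : ℝ) - j + 1) *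
          Real.log (qJ p (2 * j - 2) * p (2 * j - 1) * qJ p (2 * j - 1) * p (2 * j)) +
        (1 / 2) * Real.log (p 1 * p 2 * qJ p 1))
      + (1 / 2) * Real.log (qJ p (2 * n - 2) * t * (1 - t) * p (2 * n))
      - Real.log (SJ p (2 * n - 2) + qJ p (2 * n - 2) * t + (1 - t) * p (2 * n)) := by
  have hmemn : n ∈ Finset.Icc 1 n := by simp; omega
  unfold FJ
  have hsum : ∑ j ∈ Finset.Icc 1 n, ((n : ℝ) - j + 1) *
      Real.log (qJ (Function.update p (2 * n - 1) t) (2 * j - 2) *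
        Function.update p (2 * n - 1) t (2 * j - 1) *
        qJ (Function.update p (2 * n - 1) t) (2 * j - 1) *
        Function.update p (2 * n - 1) t (2 * j)) =
      (∑ j ∈ (Finset.Icc 1 n).erase n, ((n : ℝ) - j + 1) *
        Real.log (qJ p (2 * j - 2) * p (2 * j - 1) * qJ p (2 * j - 1) * p (2 * j)))
      + Real.log (qJ p (2 * n - 2) * t * (1 - t) * p (2 * n)) := by
    rw [← Finset.sum_erase_add _ _ hmemn]
    congr 1
    · refine Finset.sum_congr rfl fun j hj => ?_
      simp only [Finset.mem_erase, Finset.mem_Icc] at hj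
      rw [qJ_update_ne _ _ _ _ (by omega), qJ_update_ne _ _ _ _ (by omega),
        Function.update_of_ne (by omega), Function.update_of_ne (by omega)]
    · have h1 : qJ (Function.update p (2 * n - 1) t) (2 * n - 1) = 1 - t := by
        unfold qJ
        rw [if_neg (by omega), Function.update_self]
      rw [qJ_update_ne _ _ _ _ (show 2 * n - 2 ≠ 2 * n - 1 by omega), h1,
        Function.update_self, Function.update_of_ne (show 2 * n ≠ 2 * n - 1 by omega)]
      have : ((n : ℝ) - n + 1) = 1 := by ring
      rw [this, one_mul]
  have hmid : Function.update p (2 * n - 1) t 1 * Function.update p (2 * n - 1) t 2 *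
      qJ (Function.update p (2 * n - 1) t) 1 = p 1 * p 2 * qJ p 1 := by
    rw [qJ_update_ne _ _ _ _ (by omega), Function.update_of_ne (by omega),
      Function.update_of_ne (by omega)]
  have hS : SJ (Function.update p (2 * n - 1) t) (2 * n) =
      SJ p (2 * n - 2) + qJ p (2 * n - 2) * t + (1 - t) * p (2 * n) := by
    have key := SJ_update_pen p (2 * n - 2) t
    have e1 : 2 * n - 2 + 1 = 2 * n - 1 := by omega
    have e2 : 2 * n - 2 + 2 = 2 * n := by omega
    rw [e1, e2] at key
    exact key
  rw [hsum, hmid, hS]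
  ring

lemma qJ_pos (p : ℕ → ℝ) (N j : ℕ) (hj : j ≤ N)
    (hmem : ∀ i ∈ Finset.Icc 1 N, p i ∈ Set.Ioo (0 : ℝ) 1) : 0 < qJ p j := by
  by_cases h : j = 0
  · simp [qJ, h]
  · have := hmem j (Finset.mem_Icc.mpr ⟨by omega, hj⟩)
    simp only [qJ, if_neg h]
    linarith [this.2]

lemma SJ_pos (p : ℕ → ℝ) (N m : ℕ) (h1 : 1 ≤ m) (h2 : m ≤ N)
    (hmem : ∀ i ∈ Finset.Icc 1 N, p i ∈ Set.Ioo (0 : ℝ) 1) : 0 < SJ p m := by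
  unfold SJ
  apply Finset.sum_pos
  · intro i hi
    simp only [Finset.mem_Icc] at hi
    have hpi := hmem i (Finset.mem_Icc.mpr ⟨hi.1, by omega⟩)
    exact mul_pos (qJ_pos p N (i - 1) (by omega) hmem) hpi.1
  · exact ⟨1, Finset.mem_Icc.mpr ⟨le_refl 1, h1⟩⟩


/-- The Jeffreys-prior criterion `F` has no critical point in `(0,1)^{2n}`. -/
theorem FJ_no_critical_point (n : ℕ) (hn : 2 ≤ n) :
    ¬ ∃ p : ℕ → ℝ,
      (∀ j ∈ Finset.Icc 1 (2 * n), p j ∈ Set.Ioo (0 : ℝ) 1) ∧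
      (∀ j ∈ Finset.Icc 1 (2 * n),
        HasDerivAt (fun t => FJ n (Function.update p j t)) 0 (p j)) := by
  rintro ⟨p, hmem, hcrit⟩
  have h2n : 2 * n ∈ Finset.Icc 1 (2 * n) := Finset.mem_Icc.mpr ⟨by omega, le_refl _⟩
  have h2n1 : 2 * n - 1 ∈ Finset.Icc 1 (2 * n) := Finset.mem_Icc.mpr ⟨by omega, by omega⟩
  have hbmem := hmem _ h2n
  have hamem := hmem _ h2n1
  have hd1 := hcrit _ h2n
  have hd2 := hcrit _ h2n1
  rw [show (fun t => FJ n (Function.update p (2 * n) t)) = _ from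
    funext (FJ_update_top n hn p)] at hd1
  rw [show (fun t => FJ n (Function.update p (2 * n - 1) t)) = _ from
    funext (FJ_update_pen n hn p)] at hd2
  -- basic facts
  have hqa : qJ p (2 * n - 1) = 1 - p (2 * n - 1) := by
    unfold qJ; rw [if_neg (by omega)]
  have hS1 : SJ p (2 * n - 1) = SJ p (2 * n - 2) + qJ p (2 * n - 2) * p (2 * n - 1) := by
    have key := SJ_succ p (2 * n - 2)
    have e1 : 2 * n - 2 + 1 = 2 * n - 1 := by omega
    rw [e1] at key
    exact key
  have hq2pos : 0 < qJ p (2 * n - 2) := qJ_pos p (2 * n) (2 * n - 2) (by omega) hmem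
  have hS2pos : 0 < SJ p (2 * n - 2) := SJ_pos p (2 * n) (2 * n - 2) (by omega) (by omega) hmem
  set q2 := qJ p (2 * n - 2) with hq2d
  set S2 := SJ p (2 * n - 2) with hS2d
  set a := p (2 * n - 1) with had
  set b := p (2 * n) with hbd
  obtain ⟨ha, ha1⟩ := hamem
  obtain ⟨hb, hb1⟩ := hbmem
  have ha1' : (0 : ℝ) < 1 - a := by linarith
  have hSpos : (0 : ℝ) < S2 + q2 * a + (1 - a) * b := by
    have := mul_pos hq2pos ha
    have := mul_pos ha1' hb
    linarith
  -- extract equation 1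
  have hBne : qJ p (2 * n - 2) * p (2 * n - 1) * qJ p (2 * n - 1) * p (2 * n) ≠ 0 := by
    rw [hqa]
    have : (0:ℝ) < q2 * a * (1 - a) * b := mul_pos (mul_pos (mul_pos hq2pos ha) ha1') hb
    exact ne_of_gt this
  have hSne : SJ p (2 * n - 1) + qJ p (2 * n - 1) * p (2 * n) ≠ 0 := by
    rw [hqa, hS1]
    exact ne_of_gt (by linarith)
  have e1 := key1 _ _ _ _ _ hBne hSne hd1
  rw [hqa, hS1] at e1
  -- extract equation 2
  have hBne2 : q2 * a * (1 - a) * b ≠ 0 :=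
    ne_of_gt (mul_pos (mul_pos (mul_pos hq2pos ha) ha1') hb)
  have hSne2 : S2 + q2 * a + (1 - a) * b ≠ 0 := ne_of_gt hSpos
  have e2 := key2 _ _ _ _ _ hBne2 hSne2 hd2
  -- final algebra
  have hb' : b ≠ 0 := ne_of_gt hb
  have ha' : a ≠ 0 := ne_of_gt ha
  have ha1'' : (1 : ℝ) - a ≠ 0 := ne_of_gt ha1'
  have hq' : q2 ≠ 0 := ne_of_gt hq2pos
  field_simp at e1 e2
  have hpos : (0 : ℝ) < q2 * a * (1 - a) := mul_pos (mul_pos hq2pos ha) ha1'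
  have c1 : S2 + q2 * a + (1 - a) * b = 2 * (1 - a) * b := by
    have e1' : q2 * a / (q2 * a * b) - 2 * (1 - a) / (S2 + a * q2 + (1 - a) * b) = 2 * 0 := e1
    have hx : q2 * a / (q2 * a * b) = 1 / b := by field_simp
    rw [hx] at e1'
    have h3 : 1 / b = 2 * (1 - a) / (S2 + a * q2 + (1 - a) * b) := by linarith
    rw [div_eq_div_iff hb' (by linarith)] at h3
    linear_combination h3
  have c2 : 2 * q2 * (1 - a) * b * (b * (1 - a)) = 2 * q2 * (1 - a) * b * (a * q2) := by
    linear_combination (q2 * b) * e2 - (q2 * b * (1 - 2 * a)) * c1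
  have hpos2 : (0 : ℝ) < 2 * q2 * (1 - a) * b := by
    nlinarith [mul_pos (mul_pos hq2pos ha1') hb]
  have c2' : b * (1 - a) = a * q2 := mul_left_cancel₀ (ne_of_gt hpos2) c2
  nlinarith [c1, c2']
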